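/- Let X be a countable uniformly discrete metric space admitting a uniform embedding into a countable discrete group G equipped with a proper left-invariant metric. Then there exist R > 0 and a subset Y ⊆ X such that every point of X lies within distance R of Y (so the inclusion Y ⊆ X is a coarse equivalence) and Y admits a free, globally controlled atlas. -/
import Mathlib


open Metric

def UniformlyDiscrete (X : Type*) [MetricSpace X] : Prop :=
  ∃ δ > (0:ℝ), ∀ x y : X, x ≠ y → δ ≤ dist x y

def IsUniformEmbeddingMap {X Y : Type*} [MetricSpace X] [MetricSpace Y]
    (f : X → Y) : Prop :=
  (∀ R > (0:ℝ), ∃ S > (0:ℝ), ∀ x y : X, dist x y ≤ R → dist (f x) (f y) ≤ S) ∧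
  (∀ R > (0:ℝ), ∃ S > (0:ℝ), ∀ x y : X, dist (f x) (f y) ≤ R → dist x y ≤ S)

/-- A partial bijection of `X`: a subset of `X × X` both of whose coordinate
projections are injective. -/
def IsPartialBijection {X : Type*} (t : Set (X × X)) : Prop :=
  ∀ p ∈ t, ∀ q ∈ t, (p.1 = q.1 → p = q) ∧ (p.2 = q.2 → p = q)

/-- A partial translation of `X`: a partial bijection moving points a uniformly
bounded distance. -/
def IsPartialTranslation {X : Type*} [MetricSpace X] (t : Set (X × X)) : Prop :=
  IsPartialBijection t ∧ ∃ B : ℝ, ∀ p ∈ t, dist p.1 p.2 ≤ B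

/-- `σ` is a partial cotranslation for the family `T` of partial translations:
`σ` is a partial bijection, and whenever `(x,y) ∈ t ∈ T` and `σ` is defined at
both `x` and `y`, then `(σ x, σ y) ∈ t`.  Here `(x, x') ∈ σ` means `σ x = x'`. -/
def IsPartialCotranslationFor {X : Type*} [MetricSpace X]
    (T : Set (Set (X × X))) (σ : Set (X × X)) : Prop :=
  IsPartialBijection σ ∧
    ∀ t ∈ T, ∀ x y x' y' : X, (x, y) ∈ t → (x, x') ∈ σ → (y, y') ∈ σ → (x', y') ∈ t

/-- `(T, Sig)` is an atlas chart at scale `R` with multiplicity bound `k`: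
`T` is a finite set of pairwise disjoint partial translations whose union
contains the `R`-neighbourhood of the diagonal, `Sig` is a set of partial
cotranslations for `T`, at most `k` elements of `Sig` send `x` to `x'` for any
`x, x'`, and the elements of `Sig` act transitively on each `t ∈ T`. -/
def IsAtlasAt {X : Type*} [MetricSpace X] (R : ℝ) (k : ℕ)
    (T : Set (Set (X × X))) (Sig : Set (Set (X × X))) : Prop :=
  T.Finite ∧
  (∀ t ∈ T, IsPartialTranslation t) ∧
  T.Pairwise Disjoint ∧
  (∀ x y : X, dist x y < R → ∃ t ∈ T, (x, y) ∈ t) ∧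
  (∀ σ ∈ Sig, IsPartialCotranslationFor T σ) ∧
  (∀ x x' : X, {σ ∈ Sig | (x, x') ∈ σ}.Finite ∧ {σ ∈ Sig | (x, x') ∈ σ}.ncard ≤ k) ∧
  (∀ t ∈ T, ∀ x y x' y' : X, (x, y) ∈ t → (x', y') ∈ t →
    ∃ σ ∈ Sig, (x, x') ∈ σ ∧ (y, y') ∈ σ)

/-- The cotranslation orbit of the pair `(x, y)` under `Sig`. -/
def cotranslationOrbit {X : Type*} (Sig : Set (Set (X × X))) (x y : X) :
    Set (X × X) :=
  {p : X × X | ∃ σ ∈ Sig, (x, p.1) ∈ σ ∧ (y, p.2) ∈ σ}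

/-- An atlas chart is globally controlled if every cotranslation orbit is a
partial translation. -/
def IsGloballyControlledAt {X : Type*} [MetricSpace X]
    (Sig : Set (Set (X × X))) : Prop :=
  ∀ x y : X, IsPartialTranslation (cotranslationOrbit Sig x y)

lemma aux_atlas15 {Y G : Type*} [MetricSpace Y] [Group G] [MetricSpace G]
    (hinv : ∀ g x y : G, dist (g * x) (g * y) = dist x y)
    (hproper : ∀ (x : G) (r : ℝ), (closedBall x r).Finite)
    (φ : Y → G) (hinj : Function.Injective φ)
    (hupper : ∀ R > (0:ℝ), ∃ S > (0:ℝ), ∀ x y : Y, dist x y ≤ R → dist (φ x) (φ y) ≤ S)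
    (hlower : ∀ R > (0:ℝ), ∃ S > (0:ℝ), ∀ x y : Y, dist (φ x) (φ y) ≤ R → dist x y ≤ S)
    (R' : ℝ) (hR' : 0 < R') :
    ∃ T Sig : Set (Set (Y × Y)), IsAtlasAt R' 1 T Sig ∧ IsGloballyControlledAt Sig := by
  classical
  set tg : G → Set (Y × Y) := fun g => {p | φ p.2 = φ p.1 * g} with htg
  set sg : G → Set (Y × Y) := fun h => {p | φ p.2 = h * φ p.1} with hsg
  obtain ⟨S', hS'pos, hS'⟩ := hupper R' hR'
  have hbdd : ∀ c : G, ∃ B : ℝ, ∀ p : Y × Y, dist (φ p.1) (φ p.2) = dist 1 c →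
      dist p.1 p.2 ≤ B := by
    intro c
    obtain ⟨S, hSpos, hS⟩ := hlower (dist (1:G) c + 1) (by positivity)
    exact ⟨S, fun p hp => hS _ _ (by rw [hp]; linarith)⟩
  refine ⟨tg '' (closedBall 1 S'), Set.range sg, ⟨?_, ?_, ?_, ?_, ?_, ?_, ?_⟩, ?_⟩
  · exact (hproper 1 S').image tg
  · rintro t ⟨g, -, rfl⟩
    constructor
    · intro p hp q hq
      constructor
      · intro h1
        have : p.2 = q.2 := hinj (by rw [hp, hq, h1])
        exact Prod.ext h1 this
      · intro h2
        have : φ p.1 * g = φ q.1 * g := by rw [← hp, ← hq, h2]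
        exact Prod.ext (hinj (mul_right_cancel this)) h2
    · obtain ⟨B, hB⟩ := hbdd g
      refine ⟨B, fun p hp => hB p ?_⟩
      have hp' : φ p.2 = φ p.1 * g := hp
      rw [hp']
      calc dist (φ p.1) (φ p.1 * g) = dist (φ p.1 * 1) (φ p.1 * g) := by rw [mul_one]
        _ = dist 1 g := hinv _ _ _
  · rintro _ ⟨g, -, rfl⟩ _ ⟨h, -, rfl⟩ hne
    rw [Set.disjoint_left]
    intro p hpg hph
    apply hne
    have hg' : φ p.2 = φ p.1 * g := hpg
    have hh' : φ p.2 = φ p.1 * h := hph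
    have : g = h := mul_left_cancel (hg'.symm.trans hh')
    rw [this]
  · intro x y hxy
    refine ⟨tg ((φ x)⁻¹ * φ y), ⟨(φ x)⁻¹ * φ y, ?_, rfl⟩, ?_⟩
    · rw [mem_closedBall]
      have : dist ((φ x)⁻¹ * φ y) 1 = dist (φ y) (φ x) := by
        rw [← hinv (φ x) ((φ x)⁻¹ * φ y) 1, mul_inv_cancel_left, mul_one]
      rw [this, dist_comm]
      exact hS' x y hxy.le
    · show φ y = φ x * ((φ x)⁻¹ * φ y)
      rw [mul_inv_cancel_left]
  · rintro σ ⟨h, rfl⟩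
    constructor
    · intro p hp q hq
      have hp' : φ p.2 = h * φ p.1 := hp
      have hq' : φ q.2 = h * φ q.1 := hq
      constructor
      · intro h1
        exact Prod.ext h1 (hinj (by rw [hp', hq', h1]))
      · intro h2
        have : h * φ p.1 = h * φ q.1 := by rw [← hp', ← hq', h2]
        exact Prod.ext (hinj (mul_left_cancel this)) h2
    · rintro t ⟨g, -, rfl⟩ x y x' y' hxy hx hy
      show φ y' = φ x' * g
      have hxy' : φ y = φ x * g := hxy
      have hx' : φ x' = h * φ x := hx
      have hy' : φ y' = h * φ y := hy
      rw [hy', hxy', hx', mul_assoc]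
  · intro x x'
    have hsub : {σ ∈ Set.range sg | (x, x') ∈ σ} ⊆ {sg (φ x' * (φ x)⁻¹)} := by
      rintro σ ⟨⟨h, rfl⟩, hm⟩
      have hm' : φ x' = h * φ x := hm
      have : h = φ x' * (φ x)⁻¹ := by
        rw [eq_mul_inv_iff_mul_eq, ← hm']
      rw [this]
      rfl
    refine ⟨(Set.finite_singleton _).subset hsub, ?_⟩
    exact (Set.ncard_le_ncard hsub (Set.finite_singleton _)).trans (by simp)
  · rintro t ⟨g, -, rfl⟩ x y x' y' hxy hxy'
    refine ⟨sg (φ x' * (φ x)⁻¹), ⟨_, rfl⟩, ?_, ?_⟩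
    · show φ x' = (φ x' * (φ x)⁻¹) * φ x
      rw [inv_mul_cancel_right]
    · show φ y' = (φ x' * (φ x)⁻¹) * φ y
      have h1 : φ y = φ x * g := hxy
      have h2 : φ y' = φ x' * g := hxy'
      rw [h2, h1, ← mul_assoc, inv_mul_cancel_right]
  · intro x y
    constructor
    · rintro p ⟨σp, ⟨h, rfl⟩, hp1, hp2⟩ q ⟨σq, ⟨h', rfl⟩, hq1, hq2⟩
      have hp1' : φ p.1 = h * φ x := hp1
      have hp2' : φ p.2 = h * φ y := hp2
      have hq1' : φ q.1 = h' * φ x := hq1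
      have hq2' : φ q.2 = h' * φ y := hq2
      constructor
      · intro h1
        have : h = h' := mul_right_cancel ((hp1'.symm.trans (by rw [h1])).trans hq1')
        exact Prod.ext h1 (hinj (by rw [hp2', hq2', this]))
      · intro h2
        have : h = h' := mul_right_cancel ((hp2'.symm.trans (by rw [h2])).trans hq2')
        exact Prod.ext (hinj (by rw [hp1', hq1', this])) h2
    · obtain ⟨S, hSpos, hS⟩ := hlower (dist (φ x) (φ y) + 1) (by positivity)
      refine ⟨S, ?_⟩
      rintro p ⟨σ, ⟨h, rfl⟩, hp1, hp2⟩
      have hp1' : φ p.1 = h * φ x := hp1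
      have hp2' : φ p.2 = h * φ y := hp2
      refine hS _ _ ?_
      rw [hp1', hp2', hinv]
      linarith

theorem stmt15 (X : Type) [MetricSpace X] [Countable X]
    (hud : UniformlyDiscrete X)
    (G : Type) [Group G] [Countable G] [MetricSpace G]
    (hinv : ∀ g x y : G, dist (g * x) (g * y) = dist x y)
    (hproper : ∀ (x : G) (r : ℝ), (closedBall x r).Finite)
    (ψ : X → G) (hue : IsUniformEmbeddingMap ψ) :
    ∃ R > (0:ℝ), ∃ Y : Set X,
      (∀ x : X, ∃ y ∈ Y, dist x y ≤ R) ∧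
      ∀ R' > (0:ℝ), ∃ T Sig : Set (Set (↥Y × ↥Y)),
        IsAtlasAt R' 1 T Sig ∧ IsGloballyControlledAt Sig := by
  classical
  obtain ⟨S0, hS0pos, hS0⟩ := hue.2 1 one_pos
  rcases isEmpty_or_nonempty X with hX | hX
  · refine ⟨1, one_pos, Set.univ, fun x => isEmptyElim x, fun R' hR' => ?_⟩
    exact aux_atlas15 hinv hproper (fun y : ↥(Set.univ : Set X) => ψ y.1)
      (fun a => hX.elim a.1)
      (fun R hR => ⟨1, one_pos, fun a => hX.elim a.1⟩)
      (fun R hR => ⟨1, one_pos, fun a => hX.elim a.1⟩) R' hR'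
  · let r : G → X := Function.invFun ψ
    have hr : ∀ x : X, ψ (r (ψ x)) = ψ x := fun x => Function.invFun_eq ⟨x, rfl⟩
    refine ⟨max S0 1, lt_max_of_lt_right one_pos,
      Set.range (fun x => r (ψ x)), ?_, fun R' hR' => ?_⟩
    · intro x
      refine ⟨r (ψ x), ⟨x, rfl⟩, ?_⟩
      refine (hS0 x (r (ψ x)) ?_).trans (le_max_left _ _)
      rw [hr]
      simp
    · have hinj : Function.Injective
          (fun y : ↥(Set.range (fun x => r (ψ x))) => ψ y.1) := by
        rintro ⟨y1, x1, rfl⟩ ⟨y2, x2, rfl⟩ h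
        simp only at h
        rw [hr, hr] at h
        exact Subtype.ext (by simp only; rw [h])
      refine aux_atlas15 hinv hproper _ hinj ?_ ?_ R' hR'
      · intro R hR
        obtain ⟨S, hS, h⟩ := hue.1 R hR
        exact ⟨S, hS, fun a b hab => h a.1 b.1 (by rwa [Subtype.dist_eq] at hab)⟩
      · intro R hR
        obtain ⟨S, hS, h⟩ := hue.2 R hR
        exact ⟨S, hS, fun a b hab => by rw [Subtype.dist_eq]; exact h a.1 b.1 hab⟩
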